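/- There exists a sequence of functions G₀, G₁, G₂, … each holomorphic on the open right half-plane {Re z > 0}, such that G₀(z) = z for all Re z > 0, G₁(z) = Γ(z) for all Re z > 0, Gₙ(1) = 1 for every n ≥ 0, and Gₙ(z)·G_{n+1}(z) = G_{n+1}(z + 1) for every n ≥ 0 and every z with Re z > 0. -/

import Mathlib

open Complex

open Complex Set Filter intervalIntegral MeasureTheory

noncomputable section Stmt19Aux

def Om : Set ℂ := {z : ℂ | 0 < z.re}

lemma om_open : IsOpen Om := isOpen_lt continuous_const continuous_re

lemma om_convex : Convex ℝ Om := convex_halfSpace_re_gt 0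

lemma one_mem_om : (1:ℂ) ∈ Om := by simp [Om]

lemma add_one_mem_om {z : ℂ} (hz : z ∈ Om) : z + 1 ∈ Om := by
  simp only [Om, mem_setOf_eq, add_re, one_re] at hz ⊢; linarith

lemma om_ne_zero {z : ℂ} (hz : z ∈ Om) : z ≠ 0 := by
  rintro rfl; simp [Om] at hz

lemma om_slit {z : ℂ} (hz : z ∈ Om) : z ∈ Complex.slitPlane := Or.inl hz

lemma eqOn_deriv {f g : ℂ → ℂ} (h : EqOn f g Om) : EqOn (deriv f) (deriv g) Om := fun _ hz =>
  Filter.EventuallyEq.deriv_eq (Filter.eventuallyEq_of_mem (om_open.mem_nhds hz) h)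

lemma eqOn_iter_deriv {f g : ℂ → ℂ} (h : EqOn f g Om) (k : ℕ) :
    EqOn (deriv^[k] f) (deriv^[k] g) Om := by
  induction k with
  | zero => exact h
  | succ k ih =>
      rw [Function.iterate_succ_apply', Function.iterate_succ_apply']
      exact eqOn_deriv ih

lemma diffOn_deriv {f : ℂ → ℂ} (hf : DifferentiableOn ℂ f Om) :
    DifferentiableOn ℂ (deriv f) Om :=
  ((hf.analyticOnNhd om_open).deriv).differentiableOn

lemma diffOn_iter {f : ℂ → ℂ} (hf : DifferentiableOn ℂ f Om) (k : ℕ) :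
    DifferentiableOn ℂ (deriv^[k] f) Om := by
  induction k with
  | zero => exact hf
  | succ k ih =>
      rw [Function.iterate_succ_apply']
      exact diffOn_deriv ih

lemma om_const {f : ℂ → ℂ} (hf : DifferentiableOn ℂ f Om)
    (h0 : ∀ z ∈ Om, deriv f z = 0) {z : ℂ} (hz : z ∈ Om) : f z = f 1 := by
  apply om_convex.is_const_of_fderivWithin_eq_zero hf _ hz one_mem_om
  intro x hx
  rw [fderivWithin_of_isOpen om_open hx]
  have hd : HasDerivAt f 0 x := by
    have := (hf.differentiableAt (om_open.mem_nhds hx)).hasDerivAt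
    rwa [h0 x hx] at this
  have := hd.hasFDerivAt.fderiv
  rw [this]
  ext v
  simp

lemma exists_primitive {f : ℂ → ℂ} (hf : DifferentiableOn ℂ f Om) :
    ∃ F : ℂ → ℂ, ∀ z ∈ Om, HasDerivAt F (f z) z := by
  have hfc : ContinuousOn f Om := hf.continuousOn
  have hf'd : DifferentiableOn ℂ (deriv f) Om := diffOn_deriv hf
  have hf'c : ContinuousOn (deriv f) Om := hf'd.continuousOn
  refine ⟨fun z => ∫ t in (0:ℝ)..1, ((z - 1) * f (1 + (t:ℂ) * (z - 1))), ?_⟩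
  intro z₀ hz₀
  have hz₀re : 0 < z₀.re := hz₀
  set ε : ℝ := z₀.re / 2 with hε
  have hεpos : 0 < ε := by positivity
  -- membership of path points in Om
  have hσ : ∀ (t : ℝ), t ∈ Icc (0:ℝ) 1 → ∀ x ∈ Metric.closedBall z₀ ε,
      (1 + (t:ℂ) * (x - 1)) ∈ Om := by
    intro t ht x hx
    have hxre : z₀.re - ε ≤ x.re := by
      have := Complex.abs_re_le_norm (x - z₀)
      have hd : ‖x - z₀‖ ≤ ε := by
        rwa [Metric.mem_closedBall, Complex.dist_eq] at hx
      simp only [sub_re] at this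
      have := abs_le.mp (le_trans this hd)
      linarith [this.1]
    have : (1 + (t:ℂ) * (x - 1)).re = 1 + t * (x.re - 1) := by
      simp [Complex.add_re, Complex.mul_re, Complex.ofReal_re, Complex.ofReal_im, Complex.sub_re]
    rw [Om, mem_setOf_eq, this]
    rcases le_or_gt x.re 1 with hc | hc
    · nlinarith [ht.1, ht.2]
    · nlinarith [ht.1, ht.2]
  -- the compact set of path points
  set K : Set ℂ := (fun p : ℝ × ℂ => 1 + (p.1:ℂ) * (p.2 - 1)) ''
      (Icc (0:ℝ) 1 ×ˢ Metric.closedBall z₀ ε) with hK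
  have hKcomp : IsCompact K :=
    (isCompact_Icc.prod (isCompact_closedBall z₀ ε)).image (by continuity)
  have hKOm : K ⊆ Om := by
    rintro w ⟨⟨t, x⟩, ⟨ht, hx⟩, rfl⟩
    exact hσ t ht x hx
  obtain ⟨C₁, hC₁⟩ := hKcomp.exists_bound_of_continuousOn (hfc.mono hKOm)
  obtain ⟨C₂, hC₂⟩ := hKcomp.exists_bound_of_continuousOn (hf'c.mono hKOm)
  have memK : ∀ (t : ℝ), t ∈ Icc (0:ℝ) 1 → ∀ x ∈ Metric.closedBall z₀ ε,
      (1 + (t:ℂ) * (x - 1)) ∈ K := by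
    intro t ht x hx; exact ⟨(t, x), ⟨ht, hx⟩, rfl⟩
  -- apply differentiation under the integral sign
  have key := intervalIntegral.hasDerivAt_integral_of_dominated_loc_of_deriv_le
    (F := fun (x : ℂ) (t : ℝ) => (x - 1) * f (1 + (t:ℂ) * (x - 1)))
    (F' := fun (x : ℂ) (t : ℝ) =>
      f (1 + (t:ℂ) * (x - 1)) + (x - 1) * deriv f (1 + (t:ℂ) * (x - 1)) * (t:ℂ))
    (x₀ := z₀) (a := 0) (b := 1) (μ := volume)
    (bound := fun _ => C₁ + (‖z₀ - 1‖ + ε) * C₂) (Metric.ball_mem_nhds z₀ hεpos) ?_ ?_ ?_ ?_ ?_ ?_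
  · -- now identify the derivative value
    obtain ⟨hint, hder⟩ := key
    have hval : (∫ t in (0:ℝ)..1,
        (f (1 + (t:ℂ) * (z₀ - 1)) + (z₀ - 1) * deriv f (1 + (t:ℂ) * (z₀ - 1)) * (t:ℂ)))
        = f z₀ := by
      have hphi : ∀ t ∈ uIcc (0:ℝ) 1, HasDerivAt (fun s : ℝ => (s:ℂ) * f (1 + (s:ℂ) * (z₀ - 1)))
          (f (1 + (t:ℂ) * (z₀ - 1)) + (z₀ - 1) * deriv f (1 + (t:ℂ) * (z₀ - 1)) * (t:ℂ)) t := by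
        intro t ht
        rw [uIcc_of_le zero_le_one] at ht
        have hσt : (1 + (t:ℂ) * (z₀ - 1)) ∈ Om :=
          hσ t ht z₀ (Metric.mem_closedBall_self hεpos.le)
        have hcoer : HasDerivAt (fun s : ℝ => (s:ℂ)) 1 t := Complex.ofRealCLM.hasDerivAt
        have hψ : HasDerivAt (fun s : ℝ => 1 + (s:ℂ) * (z₀ - 1)) (z₀ - 1) t := by
          simpa using (hcoer.mul_const (z₀ - 1)).const_add 1
        have hfσ : HasDerivAt f (deriv f (1 + (t:ℂ) * (z₀ - 1))) (1 + (t:ℂ) * (z₀ - 1)) :=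
          (hf.differentiableAt (om_open.mem_nhds hσt)).hasDerivAt
        have hcomp : HasDerivAt (fun s : ℝ => f (1 + (s:ℂ) * (z₀ - 1)))
            ((z₀ - 1) • deriv f (1 + (t:ℂ) * (z₀ - 1))) t := hfσ.scomp t hψ
        have := hcoer.mul hcomp
        refine this.congr_deriv ?_
        simp only [smul_eq_mul]
        ring
      have hieq := intervalIntegral.integral_eq_sub_of_hasDerivAt hphi hint
      rw [hieq]
      norm_num
    rw [hval] at hder
    exact hder
  · -- hF_meas
    filter_upwards [Metric.ball_mem_nhds z₀ hεpos] with x hx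
    apply ContinuousOn.aestronglyMeasurable _ measurableSet_uIoc
    have : uIoc (0:ℝ) 1 ⊆ Icc (0:ℝ) 1 := by
      rw [uIoc_of_le zero_le_one]; exact Ioc_subset_Icc_self
    apply ContinuousOn.mono _ this
    apply ContinuousOn.mul continuousOn_const
    apply hfc.comp (by fun_prop)
    intro t ht
    exact hσ t ht x (Metric.ball_subset_closedBall hx)
  · -- hF_int
    apply ContinuousOn.intervalIntegrable
    rw [uIcc_of_le zero_le_one]
    apply ContinuousOn.mul continuousOn_const
    apply hfc.comp (by fun_prop)
    intro t ht
    exact hσ t ht z₀ (Metric.mem_closedBall_self hεpos.le)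
  · -- hF'_meas
    apply ContinuousOn.aestronglyMeasurable _ measurableSet_uIoc
    have hsub : uIoc (0:ℝ) 1 ⊆ Icc (0:ℝ) 1 := by
      rw [uIoc_of_le zero_le_one]; exact Ioc_subset_Icc_self
    apply ContinuousOn.mono _ hsub
    have hmem : ∀ t ∈ Icc (0:ℝ) 1, (1 + (t:ℂ) * (z₀ - 1)) ∈ Om := fun t ht =>
      hσ t ht z₀ (Metric.mem_closedBall_self hεpos.le)
    apply ContinuousOn.add
    · exact hfc.comp (by fun_prop) hmem
    · exact ((continuousOn_const.mul (hf'c.comp (by fun_prop) hmem)).mul (by fun_prop))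
  · -- h_bound
    apply Filter.Eventually.of_forall
    intro t ht x hx
    have ht' : t ∈ Icc (0:ℝ) 1 := by
      rw [uIoc_of_le zero_le_one] at ht; exact Ioc_subset_Icc_self ht
    have hxcb : x ∈ Metric.closedBall z₀ ε := Metric.ball_subset_closedBall hx
    have hmemK := memK t ht' x hxcb
    have h1 : ‖f (1 + (t:ℂ) * (x - 1))‖ ≤ C₁ := hC₁ _ hmemK
    have h2 : ‖deriv f (1 + (t:ℂ) * (x - 1))‖ ≤ C₂ := hC₂ _ hmemK
    have hC₂0 : 0 ≤ C₂ := le_trans (norm_nonneg _) h2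
    have hx1 : ‖x - 1‖ ≤ ‖z₀ - 1‖ + ε := by
      have : x - 1 = (x - z₀) + (z₀ - 1) := by ring
      rw [this]
      refine le_trans (norm_add_le _ _) ?_
      have : ‖x - z₀‖ ≤ ε := by
        rw [← dist_eq_norm]; exact le_of_lt (Metric.mem_ball.mp hx)
      linarith
    have htn : ‖(t:ℂ)‖ ≤ 1 := by
      rw [Complex.norm_real, Real.norm_eq_abs, _root_.abs_of_nonneg ht'.1]; exact ht'.2
    calc ‖f (1 + (t:ℂ) * (x - 1)) + (x - 1) * deriv f (1 + (t:ℂ) * (x - 1)) * (t:ℂ)‖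
        ≤ ‖f (1 + (t:ℂ) * (x - 1))‖ + ‖(x - 1) * deriv f (1 + (t:ℂ) * (x - 1)) * (t:ℂ)‖ :=
          norm_add_le _ _
      _ ≤ C₁ + (‖z₀ - 1‖ + ε) * C₂ := by
          refine add_le_add h1 ?_
          rw [norm_mul, norm_mul]
          have hmm : ‖x - 1‖ * ‖deriv f (1 + (t:ℂ) * (x - 1))‖
              ≤ (‖z₀ - 1‖ + ε) * C₂ :=
            mul_le_mul hx1 h2 (norm_nonneg _) (by positivity)
          calc ‖x - 1‖ * ‖deriv f (1 + (t:ℂ) * (x - 1))‖ * ‖(t:ℂ)‖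
              ≤ ((‖z₀ - 1‖ + ε) * C₂) * 1 :=
                mul_le_mul hmm htn (norm_nonneg _)
                  (mul_nonneg (by positivity) hC₂0)
            _ = (‖z₀ - 1‖ + ε) * C₂ := mul_one _
  · exact intervalIntegrable_const
  · -- h_diff
    apply Filter.Eventually.of_forall
    intro t ht x hx
    have ht' : t ∈ Icc (0:ℝ) 1 := by
      rw [uIoc_of_le zero_le_one] at ht; exact Ioc_subset_Icc_self ht
    have hσt : (1 + (t:ℂ) * (x - 1)) ∈ Om := hσ t ht' x (Metric.ball_subset_closedBall hx)
    have hinner : HasDerivAt (fun y : ℂ => 1 + (t:ℂ) * (y - 1)) (t:ℂ) x := by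
      simpa using (((hasDerivAt_id x).sub_const 1).const_mul (t:ℂ)).const_add 1
    have hfσ : HasDerivAt f (deriv f (1 + (t:ℂ) * (x - 1))) (1 + (t:ℂ) * (x - 1)) :=
      (hf.differentiableAt (om_open.mem_nhds hσt)).hasDerivAt
    have hcomp : HasDerivAt (fun y : ℂ => f (1 + (t:ℂ) * (y - 1)))
        (deriv f (1 + (t:ℂ) * (x - 1)) * (t:ℂ)) x := hfσ.comp x hinner
    have := ((hasDerivAt_id x).sub_const 1).mul hcomp
    refine this.congr_deriv ?_
    simp only [id]
    ring

end Stmt19Aux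


open Complex Set Filter Finset

noncomputable section Stmt19Aux2

lemma abs_le_abs_add_real {z : ℂ} (hz : 0 ≤ z.re) {c : ℝ} (hc : 0 ≤ c) :
    ‖z‖ ≤ ‖z + (c:ℂ)‖ := by
  have h1 : Complex.normSq z ≤ Complex.normSq (z + c) := by
    simp only [Complex.normSq_apply, Complex.add_re, Complex.add_im, Complex.ofReal_re,
      Complex.ofReal_im, add_zero]
    nlinarith
  rw [Complex.norm_def, Complex.norm_def]
  exact Real.sqrt_le_sqrt h1

lemma abs_shift_ge_abs {z : ℂ} (hz : 0 < z.re) (j : ℕ) :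
    ‖z‖ ≤ ‖z + 1 + (j:ℂ)‖ := by
  have := abs_le_abs_add_real hz.le (c := 1 + (j:ℝ)) (by positivity)
  have he : z + ((1 + (j:ℝ) : ℝ) : ℂ) = z + 1 + (j:ℂ) := by push_cast; ring
  rwa [he] at this

lemma abs_shift_ge_nat {z : ℂ} (hz : 0 < z.re) (j : ℕ) :
    (j:ℝ) + 1 ≤ ‖z + 1 + (j:ℂ)‖ := by
  have h := Complex.re_le_norm (z + 1 + (j:ℂ))
  simp only [Complex.add_re, Complex.one_re, Complex.natCast_re] at h
  linarith

lemma key_pointwise (i j : ℕ) {z : ℂ} (hz : 1 ≤ z.re) :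
    1 / ‖z + 1 + (j:ℂ)‖ ^ (3 + i) ≤
      (2 ^ (3 + i) / ‖z‖ ^ i) *
        (1 / (2 * (‖z‖ + j) * (‖z‖ + j + 1))
          - 1 / (2 * (‖z‖ + (j+1)) * (‖z‖ + (j+1) + 1))) := by
  have hzre : 0 < z.re := lt_of_lt_of_le one_pos hz
  set a := ‖z‖ with ha'
  have ha : 1 ≤ a := le_trans hz (Complex.re_le_norm z)
  set A := ‖z + 1 + (j:ℂ)‖ with hA'
  have hge_a : a ≤ A := abs_shift_ge_abs hzre j
  have hge_j : (j:ℝ) + 1 ≤ A := abs_shift_ge_nat hzre j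
  have hApos : 0 < A := lt_of_lt_of_le (by linarith) hge_a
  set s : ℝ := a + j + 1 with hs'
  have hspos : 0 < s := by positivity
  have hhalf : s ≤ 2 * A := by
    rcases le_total a ((j:ℝ)+1) with h | h
    · have : s ≤ 2 * ((j:ℝ)+1) := by simp only [hs']; linarith
      linarith
    · have : s ≤ 2 * a := by simp only [hs']; linarith
      linarith
  -- telescoping difference identity
  have hprodpos : 0 < (a + j) * (a + j + 1) * (a + j + 2) := by positivity
  have hd : 1 / (2 * (a + j) * (a + j + 1)) - 1 / (2 * (a + (j+1)) * (a + (j+1) + 1))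
      = 1 / ((a + j) * (a + j + 1) * (a + j + 2)) := by
    have h1 : (0:ℝ) < a + j := by positivity
    have h2 : (0:ℝ) < a + j + 1 := by positivity
    have h3 : (0:ℝ) < a + j + 2 := by positivity
    field_simp
    ring
  rw [hd, div_mul_div_comm, mul_one]
  -- main chain
  rw [div_le_div_iff₀ (by positivity) (by positivity)]
  have c1 : a ^ i * ((a + j) * (a + j + 1) * (a + j + 2)) ≤ a ^ i * s ^ 3 := by
    apply mul_le_mul_of_nonneg_left _ (by positivity)
    rw [hs']
    nlinarith [(by positivity : (0:ℝ) ≤ (j:ℝ))]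
  have c2 : a ^ i * s ^ 3 ≤ s ^ i * s ^ 3 := by
    apply mul_le_mul_of_nonneg_right _ (by positivity)
    refine pow_le_pow_left₀ (by positivity) ?_ i
    rw [hs']
    have : (0:ℝ) ≤ (j:ℝ) := by positivity
    linarith
  have c3 : s ^ i * s ^ 3 = s ^ (3 + i) := by rw [← pow_add]; ring_nf
  have c4 : s ^ (3 + i) ≤ (2 * A) ^ (3 + i) :=
    pow_le_pow_left₀ hspos.le hhalf _
  have c5 : (2 * A) ^ (3 + i) = 2 ^ (3 + i) * A ^ (3 + i) := mul_pow 2 A (3 + i)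
  calc 1 * (a ^ i * ((a + j) * (a + j + 1) * (a + j + 2)))
      = a ^ i * ((a + j) * (a + j + 1) * (a + j + 2)) := one_mul _
    _ ≤ s ^ (3 + i) := by rw [← c3]; exact le_trans c1 c2
    _ ≤ 2 ^ (3 + i) * A ^ (3 + i) := by rw [← c5]; exact c4

lemma tail_bound (i : ℕ) {z : ℂ} (hz : 1 ≤ z.re) :
    ∑' j : ℕ, 1 / ‖z + 1 + (j:ℂ)‖ ^ (3 + i) ≤
      2 ^ (3 + i) / ‖z‖ ^ (2 + i) := by
  have hzre : 0 < z.re := lt_of_lt_of_le one_pos hz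
  set a := ‖z‖ with ha'
  have ha : 1 ≤ a := le_trans hz (Complex.re_le_norm z)
  set c : ℝ := 2 ^ (3 + i) / a ^ i with hc'
  have hcpos : 0 < c := by positivity
  set b : ℕ → ℝ := fun j => 1 / (2 * (a + j) * (a + j + 1)) with hb'
  apply Real.tsum_le_of_sum_range_le (fun j => by positivity)
  intro n
  have hstep : ∀ j : ℕ, 1 / ‖z + 1 + (j:ℂ)‖ ^ (3 + i) ≤ c * (b j - b (j+1)) := by
    intro j
    have := key_pointwise i j hz
    have hcast : b (j+1) = 1 / (2 * (a + ((j:ℝ)+1)) * (a + ((j:ℝ)+1) + 1)) := by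
      simp only [hb']; push_cast; ring_nf
    rw [hcast, hb']
    exact this
  calc ∑ j ∈ Finset.range n, 1 / ‖z + 1 + (j:ℂ)‖ ^ (3 + i)
      ≤ ∑ j ∈ Finset.range n, c * (b j - b (j+1)) := Finset.sum_le_sum fun j _ => hstep j
    _ = c * (b 0 - b n) := by rw [← Finset.mul_sum, Finset.sum_range_sub' b n]
    _ ≤ c * b 0 := by
        have hbn : 0 ≤ b n := by simp only [hb']; positivity
        nlinarith
    _ ≤ 2 ^ (3 + i) / a ^ (2 + i) := by
        have key : a ^ (2 + i) ≤ a ^ i * (2 * (a + (0:ℕ)) * (a + (0:ℕ) + 1)) := by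
          have h2 : a ^ (2 + i) = a ^ i * a ^ 2 := by rw [← pow_add]; ring_nf
          push_cast
          rw [h2]
          apply mul_le_mul_of_nonneg_left _ (by positivity)
          nlinarith
        simp only [hb', hc']
        rw [div_mul_div_comm, mul_one]
        rw [div_le_div_iff₀ (by positivity) (by positivity)]
        calc (2:ℝ) ^ (3 + i) * a ^ (2 + i)
            ≤ 2 ^ (3 + i) * (a ^ i * (2 * (a + (0:ℕ)) * (a + (0:ℕ) + 1))) :=
              mul_le_mul_of_nonneg_left key (by positivity)
          _ = a ^ i * (2 * (a + (0:ℕ)) * (a + (0:ℕ) + 1)) * 2 ^ (3 + i) := by ring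
          _ ≤ 2 ^ (3 + i) * (a ^ i * (2 * (a + (0:ℕ)) * (a + (0:ℕ) + 1))) := by
              rw [mul_comm]

end Stmt19Aux2


open Complex Set Filter Finset

noncomputable section Stmt19Aux3

lemma mem_om_of_re_ge_one {z : ℂ} (hz : 1 ≤ z.re) : z ∈ Om :=
  lt_of_lt_of_le one_pos hz

lemma shift_mem_om {z : ℂ} (hz : z ∈ Om) (j : ℕ) : z + 1 + (j:ℂ) ∈ Om := by
  have hj : (0:ℝ) ≤ (j:ℝ) := by positivity
  have : (z + 1 + (j:ℂ)).re = z.re + 1 + (j:ℝ) := by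
    simp [Complex.add_re]
  simp only [Om, mem_setOf_eq] at hz ⊢
  rw [this]; linarith

lemma shift_re_ge_one {z : ℂ} (hz : z ∈ Om) (j : ℕ) : 1 ≤ (z + 1 + (j:ℂ)).re := by
  have hj : (0:ℝ) ≤ (j:ℝ) := by positivity
  have : (z + 1 + (j:ℂ)).re = z.re + 1 + (j:ℝ) := by simp [Complex.add_re]
  simp only [Om, mem_setOf_eq] at hz
  rw [this]; linarith

lemma iter_deriv_shift {f : ℂ → ℂ} (k : ℕ) :
    ∀ z ∈ Om, deriv^[k] (fun w => f (w + 1)) z = deriv^[k] f (z + 1) := by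
  induction k with
  | zero => intro z _; rfl
  | succ k ih =>
      intro z hz
      rw [Function.iterate_succ_apply', Function.iterate_succ_apply']
      have hEq : EqOn (deriv^[k] (fun w => f (w + 1))) (fun w => deriv^[k] f (w + 1)) Om :=
        fun w hw => ih w hw
      have h1 : deriv (deriv^[k] (fun w => f (w + 1))) z
          = deriv (fun w => deriv^[k] f (w + 1)) z :=
        Filter.EventuallyEq.deriv_eq (Filter.eventuallyEq_of_mem (om_open.mem_nhds hz) hEq)
      rw [h1, deriv_comp_add_const]

lemma iter_deriv_sub {f g : ℂ → ℂ} (hf : DifferentiableOn ℂ f Om)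
    (hg : DifferentiableOn ℂ g Om) (k : ℕ) :
    ∀ z ∈ Om, deriv^[k] (fun w => f w - g w) z = deriv^[k] f z - deriv^[k] g z := by
  induction k with
  | zero => intro z _; rfl
  | succ k ih =>
      intro z hz
      rw [Function.iterate_succ_apply', Function.iterate_succ_apply',
        Function.iterate_succ_apply']
      have hEq : EqOn (deriv^[k] (fun w => f w - g w))
          (fun w => deriv^[k] f w - deriv^[k] g w) Om := fun w hw => ih w hw
      have h1 : deriv (deriv^[k] (fun w => f w - g w)) z
          = deriv (fun w => deriv^[k] f w - deriv^[k] g w) z :=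
        Filter.EventuallyEq.deriv_eq (Filter.eventuallyEq_of_mem (om_open.mem_nhds hz) hEq)
      rw [h1]
      exact deriv_sub ((diffOn_iter hf k).differentiableAt (om_open.mem_nhds hz))
        ((diffOn_iter hg k).differentiableAt (om_open.mem_nhds hz))

-- derivative of a power-sum polynomial function
lemma deriv_poly_sum (n : ℕ) (c : ℕ → ℂ) :
    deriv (fun z : ℂ => ∑ i ∈ Finset.range (n+1), c i * z ^ i)
      = fun z => ∑ i ∈ Finset.range n, ((i:ℂ)+1) * c (i+1) * z ^ i := by
  funext z
  rw [deriv_fun_sum (fun i _ => (differentiableAt_pow i).const_mul (c i))]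
  have : ∀ i ∈ Finset.range (n+1), deriv (fun z : ℂ => c i * z ^ i) z
      = c i * ((i:ℂ) * z ^ (i-1)) := by
    intro i _
    rw [deriv_const_mul _ (differentiableAt_pow i), deriv_pow_field]
  rw [Finset.sum_congr rfl this, Finset.sum_range_succ']
  simp only [Nat.cast_zero, zero_mul, mul_zero, add_zero, Nat.cast_add, Nat.cast_one,
    Nat.add_sub_cancel]
  apply Finset.sum_congr rfl
  intro i _
  push_cast
  ring

lemma poly_fun_diff (n : ℕ) (c : ℕ → ℂ) :
    Differentiable ℂ (fun z : ℂ => ∑ i ∈ Finset.range n, c i * z ^ i) := by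
  apply Differentiable.fun_sum
  intro i _
  exact (differentiable_pow i).const_mul (c i)

lemma iter_deriv_poly_zero : ∀ (n : ℕ) (c : ℕ → ℂ),
    deriv^[n] (fun z : ℂ => ∑ i ∈ Finset.range n, c i * z ^ i) = fun _ => 0 := by
  intro n
  induction n with
  | zero => intro c; funext z; simp
  | succ n ih =>
      intro c
      rw [Function.iterate_succ_apply, deriv_poly_sum n c]
      exact ih _

lemma iter_deriv_zero_fun (k : ℕ) : deriv^[k] (fun _ : ℂ => (0:ℂ)) = fun _ => 0 := by
  induction k with
  | zero => rfl
  | succ k ih =>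
      rw [Function.iterate_succ_apply]
      have : deriv (fun _ : ℂ => (0:ℂ)) = fun _ => 0 := by
        funext z; exact deriv_const z 0
      rw [this, ih]

-- solving the difference equation for polynomials
lemma poly_delta : ∀ (n : ℕ) (c : ℕ → ℂ), ∃ d : ℕ → ℂ, ∀ z : ℂ,
    (∑ i ∈ Finset.range (n+1), d i * (z+1) ^ i) - (∑ i ∈ Finset.range (n+1), d i * z ^ i)
      = ∑ i ∈ Finset.range n, c i * z ^ i := by
  intro n
  induction n with
  | zero =>
      intro c
      exact ⟨fun _ => 0, fun z => by simp⟩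
  | succ n ih =>
      intro c
      set e : ℂ := c n / ((n:ℂ)+1) with he
      have hne : ((n:ℂ)+1) ≠ 0 := Nat.cast_add_one_ne_zero n
      obtain ⟨d', hd'⟩ := ih (fun i => c i - e * (Nat.choose (n+1) i))
      refine ⟨fun i => if i = n+1 then e else d' i, fun z => ?_⟩
      -- split off the top term
      have hsplit : ∀ w : ℂ, (∑ i ∈ Finset.range (n+2),
          (if i = n+1 then e else d' i) * w ^ i)
          = (∑ i ∈ Finset.range (n+1), d' i * w ^ i) + e * w ^ (n+1) := by
        intro w
        rw [Finset.sum_range_succ]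
        simp only [if_pos rfl]
        congr 1
        apply Finset.sum_congr rfl
        intro i hi
        have : i ≠ n+1 := by
          have := Finset.mem_range.mp hi; omega
        rw [if_neg this]
      rw [hsplit, hsplit]
      have hbin : (z+1) ^ (n+1) - z ^ (n+1)
          = ∑ i ∈ Finset.range (n+1), (Nat.choose (n+1) i : ℂ) * z ^ i := by
        have hpow : (z+1)^(n+1) = ∑ k ∈ Finset.range (n+2), (Nat.choose (n+1) k : ℂ) * z ^ k := by
          rw [add_pow]
          apply Finset.sum_congr rfl
          intro k _
          ring
        rw [hpow, Finset.sum_range_succ]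
        simp [Nat.choose_self]
      have hgoal : (∑ i ∈ Finset.range (n+1), d' i * (z+1) ^ i) + e * (z+1)^(n+1)
          - ((∑ i ∈ Finset.range (n+1), d' i * z ^ i) + e * z^(n+1))
          = (∑ i ∈ Finset.range n, (c i - e * (Nat.choose (n+1) i)) * z ^ i)
            + e * ((z+1)^(n+1) - z^(n+1)) := by
        rw [← hd' z]; ring
      rw [hgoal, hbin]
      have hA : ∑ i ∈ Finset.range n, (c i - e * (Nat.choose (n+1) i)) * z ^ i
          = (∑ i ∈ Finset.range n, c i * z ^ i)
            - ∑ i ∈ Finset.range n, e * ((Nat.choose (n+1) i : ℂ) * z ^ i) := by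
        rw [← Finset.sum_sub_distrib]
        apply Finset.sum_congr rfl
        intro i _
        ring
      rw [hA, Finset.mul_sum, Finset.sum_range_succ
        (fun i => e * ((Nat.choose (n+1) i : ℂ) * z ^ i)) n,
        Finset.sum_range_succ (fun i => c i * z ^ i) n]
      have hee : e * ((n:ℂ)+1) = c n := div_mul_cancel₀ _ hne
      have hch : ((Nat.choose (n+1) n : ℕ) : ℂ) = (n:ℂ)+1 := by
        rw [Nat.choose_succ_self_right]
        push_cast
        ring
      rw [hch]
      linear_combination (z ^ n) * hee

end Stmt19Aux3


open Complex Set Filter Finset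

noncomputable section Stmt19Aux4

lemma poly_of_iter_deriv_zero : ∀ (m : ℕ) (R : ℂ → ℂ), DifferentiableOn ℂ R Om →
    (∀ z ∈ Om, deriv^[m] R z = 0) → ∃ c : ℕ → ℂ, ∀ z ∈ Om,
      R z = ∑ i ∈ Finset.range m, c i * z ^ i := by
  intro m
  induction m with
  | zero =>
      intro R _ h0
      exact ⟨fun _ => 0, fun z hz => by simpa using h0 z hz⟩
  | succ m ih =>
      intro R hR h0
      obtain ⟨c, hc⟩ := ih (deriv R) (diffOn_deriv hR) (fun z hz => by
        have := h0 z hz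
        rwa [Function.iterate_succ_apply] at this)
      set Q : ℂ → ℂ := fun z => ∑ i ∈ Finset.range m, (c i / ((i:ℂ)+1)) * z ^ (i+1) with hQ
      have hQd : ∀ z : ℂ, HasDerivAt Q (∑ i ∈ Finset.range m, c i * z ^ i) z := by
        intro z
        have hterm : ∀ i ∈ Finset.range m, HasDerivAt (fun w : ℂ => (c i / ((i:ℂ)+1)) * w ^ (i+1))
            (c i * z ^ i) z := by
          intro i _
          have h := (hasDerivAt_pow (i+1) z).const_mul (c i / ((i:ℂ)+1))
          have hne : ((i:ℂ)+1) ≠ 0 := Nat.cast_add_one_ne_zero i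
          refine h.congr_deriv ?_
          push_cast
          field_simp
        exact HasDerivAt.fun_sum hterm
      have hQdiff : Differentiable ℂ Q := fun z => (hQd z).differentiableAt
      have hRQ : DifferentiableOn ℂ (fun w => R w - Q w) Om := hR.sub hQdiff.differentiableOn
      have hd0 : ∀ z ∈ Om, deriv (fun w => R w - Q w) z = 0 := by
        intro z hz
        rw [deriv_fun_sub (hR.differentiableAt (om_open.mem_nhds hz)) (hQdiff z)]
        rw [(hQd z).deriv, hc z hz]
        ring
      have hconst : ∀ z ∈ Om, R z - Q z = R 1 - Q 1 := fun z hz => om_const hRQ hd0 hz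
      refine ⟨fun i => Nat.casesOn i (R 1 - Q 1) (fun i => c i / ((i:ℂ)+1)), fun z hz => ?_⟩
      have hRz : R z = Q z + (R 1 - Q 1) := by
        have := hconst z hz
        linear_combination this
      rw [hRz, Finset.sum_range_succ' (fun i =>
        (Nat.casesOn i (R 1 - Q 1) (fun i => c i / ((i:ℂ)+1)) : ℂ) * z ^ i) m]
      simp only [pow_zero, mul_one]
      rfl

end Stmt19Aux4


open Complex Set Filter Finset

noncomputable section Stmt19Aux5

def GoodP (f : ℂ → ℂ) : Prop :=
  DifferentiableOn ℂ f Om ∧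
  ∃ m : ℕ, ∀ i : ℕ, ∃ C : ℝ, 0 ≤ C ∧ ∀ z : ℂ, 1 ≤ z.re →
    ‖deriv^[m + i] f z‖ ≤ C * (1 / ‖z‖ ^ (2 + i))

lemma summable_inv_sq : Summable (fun j : ℕ => 1 / ((j:ℝ)+1) ^ 2) := by
  have h1 : Summable (fun n : ℕ => 1 / (n:ℝ) ^ 2) := Real.summable_one_div_nat_pow.mpr (by norm_num)
  have h2 := (summable_nat_add_iff (f := fun n : ℕ => 1 / (n:ℝ) ^ 2) 1).mpr h1
  refine h2.congr fun j => ?_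
  push_cast
  ring

lemma abs_shift_pos {z : ℂ} (hz : z ∈ Om) (j : ℕ) : 0 < ‖z + 1 + (j:ℂ)‖ :=
  lt_of_lt_of_le (by positivity) (abs_shift_ge_nat hz j)

lemma solve {f : ℂ → ℂ} (hf : GoodP f) :
    ∃ F : ℂ → ℂ, GoodP F ∧ F 1 = 0 ∧ ∀ z ∈ Om, F (z + 1) = F z + f z := by
  obtain ⟨hfd, m, hm⟩ := hf
  choose C hC0 hCb using hm
  set D : ℕ → ℂ → ℂ := fun i => deriv^[m+i] f with hD
  have hDd : ∀ i, DifferentiableOn ℂ (D i) Om := fun i => diffOn_iter hfd _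
  have hDsucc : ∀ i, D (i+1) = deriv (D i) := by
    intro i
    simp only [hD]
    rw [show m + (i+1) = (m+i) + 1 from rfl, Function.iterate_succ_apply']
  -- the series terms
  have hgd : ∀ i (j : ℕ), DifferentiableOn ℂ (fun z => D i (z + 1 + (j:ℂ))) Om := by
    intro i j
    have hcomp : (fun z => D i (z + 1 + (j:ℂ))) = (D i) ∘ (fun z => z + (1 + (j:ℂ))) := by
      funext w; simp only [Function.comp]; ring_nf
    rw [hcomp]
    apply (hDd i).comp ((differentiable_id.add_const _).differentiableOn)
    intro w hw
    have := shift_mem_om hw j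
    simpa [add_assoc] using this
  have hgb : ∀ i (j : ℕ) (w : ℂ), w ∈ Om →
      ‖D i (w + 1 + (j:ℂ))‖ ≤ C i * (1 / ((j:ℝ)+1) ^ 2) := by
    intro i j w hw
    have h1 := hCb i (w + 1 + (j:ℂ)) (shift_re_ge_one hw j)
    refine le_trans h1 ?_
    apply mul_le_mul_of_nonneg_left _ (hC0 i)
    have hja : (j:ℝ) + 1 ≤ ‖w + 1 + (j:ℂ)‖ := abs_shift_ge_nat hw j
    have hj1 : (1:ℝ) ≤ (j:ℝ) + 1 := by
      have : (0:ℝ) ≤ (j:ℝ) := Nat.cast_nonneg j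
      linarith
    have hp1 : ((j:ℝ)+1) ^ 2 ≤ ((j:ℝ)+1) ^ (2+i) := pow_le_pow_right₀ hj1 (by omega)
    have hp2 : ((j:ℝ)+1) ^ (2+i) ≤ ‖w + 1 + (j:ℂ)‖ ^ (2+i) :=
      pow_le_pow_left₀ (by positivity) hja _
    apply one_div_le_one_div_of_le (by positivity)
    exact le_trans hp1 hp2
  have hu : ∀ i, Summable (fun j : ℕ => C i * (1 / ((j:ℝ)+1) ^ 2)) :=
    fun i => summable_inv_sq.mul_left (C i)
  set T : ℕ → ℂ → ℂ := fun i z => ∑' j : ℕ, D i (z + 1 + (j:ℂ)) with hT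
  have hTd : ∀ i, DifferentiableOn ℂ (T i) Om := fun i =>
    differentiableOn_tsum_of_summable_norm (hu i) (hgd i) om_open (fun j w hw => hgb i j w hw)
  have hsum : ∀ i (z : ℂ), z ∈ Om → Summable (fun j : ℕ => D i (z + 1 + (j:ℂ))) := by
    intro i z hz
    exact Summable.of_norm_bounded (hu i) (fun j => hgb i j z hz)
  have hTderiv : ∀ i, ∀ z ∈ Om, deriv (T i) z = T (i+1) z := by
    intro i z hz
    have hhs := hasSum_deriv_of_summable_norm (hu i) (hgd i) om_open
      (fun j w hw => hgb i j w hw) hz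
    have hterm : ∀ j : ℕ, deriv (fun w => D i (w + 1 + (j:ℂ))) z = D (i+1) (z + 1 + (j:ℂ)) := by
      intro j
      have hcomp : (fun w : ℂ => D i (w + 1 + (j:ℂ))) = fun w => D i (w + (1 + (j:ℂ))) := by
        funext w; ring_nf
      rw [hcomp, deriv_comp_add_const, hDsucc i]
      congr 1
      ring
    have := hhs.tsum_eq
    rw [← this]
    exact tsum_congr hterm
  -- bound for T at index 1 + i
  have hTb : ∀ (i : ℕ) (z : ℂ), 1 ≤ z.re →
      ‖T (1+i) z‖ ≤ C (1+i) * (2 ^ (3+i) / ‖z‖ ^ (2+i)) := by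
    intro i z hz
    have hzom : z ∈ Om := mem_om_of_re_ge_one hz
    have hnorm : ‖T (1+i) z‖ ≤ ∑' j : ℕ, ‖D (1+i) (z + 1 + (j:ℂ))‖ := by
      apply norm_tsum_le_tsum_norm
      exact Summable.of_nonneg_of_le (fun j => norm_nonneg _) (fun j => hgb (1+i) j z hzom)
        (hu (1+i))
    have hsummaj : Summable (fun j : ℕ => C (1+i) * (1 / ‖z + 1 + (j:ℂ)‖ ^ (3+i))) := by
      apply Summable.of_nonneg_of_le (fun j => mul_nonneg (hC0 _) (by positivity)) _ (hu (1+i))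
      intro j
      apply mul_le_mul_of_nonneg_left _ (hC0 (1+i))
      have hja : (j:ℝ) + 1 ≤ ‖z + 1 + (j:ℂ)‖ := abs_shift_ge_nat hzom j
      have hj1 : (1:ℝ) ≤ (j:ℝ) + 1 := by
        have : (0:ℝ) ≤ (j:ℝ) := Nat.cast_nonneg j
        linarith
      have hp1 : ((j:ℝ)+1) ^ 2 ≤ ((j:ℝ)+1) ^ (3+i) := pow_le_pow_right₀ hj1 (by omega)
      have hp2 : ((j:ℝ)+1) ^ (3+i) ≤ ‖z + 1 + (j:ℂ)‖ ^ (3+i) :=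
        pow_le_pow_left₀ (by positivity) hja _
      apply one_div_le_one_div_of_le (by positivity)
      exact le_trans hp1 hp2
    have hterm : ∀ j : ℕ, ‖D (1+i) (z + 1 + (j:ℂ))‖
        ≤ C (1+i) * (1 / ‖z + 1 + (j:ℂ)‖ ^ (3+i)) := by
      intro j
      have h1 := hCb (1+i) (z + 1 + (j:ℂ)) (shift_re_ge_one hzom j)
      refine le_trans h1 ?_
      apply mul_le_mul_of_nonneg_left _ (hC0 (1+i))
      rw [show 2 + (1+i) = 3 + i from by omega]
    have hmono : ∑' j : ℕ, ‖D (1+i) (z + 1 + (j:ℂ))‖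
        ≤ ∑' j : ℕ, C (1+i) * (1 / ‖z + 1 + (j:ℂ)‖ ^ (3+i)) := by
      apply Summable.tsum_le_tsum hterm
      · exact Summable.of_nonneg_of_le (fun j => norm_nonneg _)
          (fun j => hgb (1+i) j z hzom) (hu (1+i))
      · exact hsummaj
    have htail : ∑' j : ℕ, C (1+i) * (1 / ‖z + 1 + (j:ℂ)‖ ^ (3+i))
        ≤ C (1+i) * (2 ^ (3+i) / ‖z‖ ^ (2+i)) := by
      rw [tsum_mul_left]
      apply mul_le_mul_of_nonneg_left _ (hC0 (1+i))
      exact tail_bound i hz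
    linarith
  -- the function h with Δh = D 0
  set h : ℂ → ℂ := fun z => -(D 0 z) - T 0 z with hh
  have hhd : DifferentiableOn ℂ h Om := ((hDd 0).neg).sub (hTd 0)
  have hiter : ∀ k, ∀ z ∈ Om, deriv^[k] h z = -(D k z) - T k z := by
    intro k
    induction k with
    | zero => intro z _; rfl
    | succ k ih =>
        intro z hz
        rw [Function.iterate_succ_apply']
        have hEq : EqOn (deriv^[k] h) (fun w => -(D k w) - T k w) Om := fun w hw => ih w hw
        have h1 : deriv (deriv^[k] h) z = deriv (fun w => -(D k w) - T k w) z :=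
          Filter.EventuallyEq.deriv_eq (Filter.eventuallyEq_of_mem (om_open.mem_nhds hz) hEq)
        rw [h1, deriv_fun_sub (((hDd k).differentiableAt (om_open.mem_nhds hz)).fun_neg)
          ((hTd k).differentiableAt (om_open.mem_nhds hz)), deriv.fun_neg]
        rw [hTderiv k z hz, ← hDsucc k]
  have hΔh : ∀ z ∈ Om, h (z+1) = h z + D 0 z := by
    intro z hz
    have hsz := hsum 0 z hz
    have h1 : T 0 z = D 0 (z+1) + T 0 (z+1) := by
      rw [hT]
      simp only
      rw [hsz.tsum_eq_zero_add]
      congr 1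
      · norm_num
      · apply tsum_congr
        intro j
        congr 1
        push_cast
        ring
    simp only [hh]
    rw [h1]
    ring
  -- m-fold primitive of h
  have hprim : ∀ (k : ℕ), ∃ P : ℂ → ℂ, DifferentiableOn ℂ P Om ∧
      ∀ z ∈ Om, deriv^[k] P z = h z := by
    intro k
    induction k with
    | zero => exact ⟨h, hhd, fun z _ => rfl⟩
    | succ k ih =>
        obtain ⟨Q, hQd, hQk⟩ := ih
        obtain ⟨P, hP⟩ := exists_primitive hQd
        refine ⟨P, fun z hz => ((hP z hz).differentiableAt).differentiableWithinAt, ?_⟩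
        intro z hz
        rw [Function.iterate_succ_apply]
        have hEq : EqOn (deriv P) Q Om := fun w hw => (hP w hw).deriv
        rw [eqOn_iter_deriv hEq k hz]
        exact hQk z hz
  obtain ⟨P, hPd, hPm⟩ := hprim m
  have hPshift : DifferentiableOn ℂ (fun w => P (w + 1)) Om := by
    have : (fun w : ℂ => P (w+1)) = P ∘ (fun w => w + 1) := rfl
    rw [this]
    exact hPd.comp ((differentiable_id.add_const _).differentiableOn)
      (fun w hw => add_one_mem_om hw)
  set R : ℂ → ℂ := fun z => P (z+1) - P z - f z with hR
  have hRd : DifferentiableOn ℂ R Om := (hPshift.sub hPd).sub hfd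
  have hRiter : ∀ z ∈ Om, deriv^[m] R z = 0 := by
    intro z hz
    have e0 : R = fun w => (fun w => P (w+1) - P w) w - f w := rfl
    rw [e0, iter_deriv_sub (hPshift.fun_sub hPd) hfd m z hz,
      iter_deriv_sub hPshift hPd m z hz, iter_deriv_shift m z hz]
    rw [hPm (z+1) (add_one_mem_om hz), hPm z hz]
    have hD0 : deriv^[m] f = D 0 := by simp [hD]
    rw [hD0, hΔh z hz]
    ring
  obtain ⟨c, hc⟩ := poly_of_iter_deriv_zero m R hRd hRiter
  obtain ⟨d, hdpoly⟩ := poly_delta m c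
  set Qd : ℂ → ℂ := fun z => ∑ i ∈ Finset.range (m+1), d i * z ^ i with hQd'
  have hQdd : Differentiable ℂ Qd := poly_fun_diff (m+1) d
  set F0 : ℂ → ℂ := fun z => P z - Qd z with hF0
  set F : ℂ → ℂ := fun z => F0 z - F0 1 with hF
  have hFd : DifferentiableOn ℂ F Om :=
    ((hPd.sub hQdd.differentiableOn).sub (differentiableOn_const _))
  have hFΔ : ∀ z ∈ Om, F (z + 1) = F z + f z := by
    intro z hz
    have h1 := hc z hz
    have h2 := hdpoly z
    simp only [hF, hF0, hR] at *
    linear_combination h1 - h2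
  refine ⟨F, ⟨hFd, m+1, ?_⟩, by simp [hF], hFΔ⟩
  intro i
  refine ⟨C (1+i) * (1 + 2 ^ (3+i)), mul_nonneg (hC0 _) (by positivity), ?_⟩
  intro z hz
  have hzom : z ∈ Om := mem_om_of_re_ge_one hz
  -- reduce deriv^[m+1+i] F to deriv^[1+i] h and the poly part
  have hFF0 : ∀ k : ℕ, deriv^[k+1] F = deriv^[k+1] F0 := by
    intro k
    rw [Function.iterate_succ_apply, Function.iterate_succ_apply]
    congr 1
    funext w
    exact deriv_sub_const (F0 1)
  have e1 : m + 1 + i = (m + i) + 1 := by omega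
  have e2 : deriv^[m+1+i] F z = deriv^[m+1+i] F0 z := by
    rw [e1, hFF0 (m+i)]
  have e3 : deriv^[m+1+i] F0 z = deriv^[m+1+i] P z - deriv^[m+1+i] Qd z := by
    exact iter_deriv_sub hPd hQdd.differentiableOn (m+1+i) z hzom
  have e4 : deriv^[m+1+i] Qd z = 0 := by
    have : m + 1 + i = i + (m+1) := by omega
    rw [this, Function.iterate_add_apply]
    rw [hQd', iter_deriv_poly_zero (m+1) d, iter_deriv_zero_fun i]
  have e5 : deriv^[m+1+i] P z = deriv^[1+i] h z := by
    have : m + 1 + i = (1 + i) + m := by omega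
    rw [this, Function.iterate_add_apply]
    exact eqOn_iter_deriv (fun w hw => hPm w hw) (1+i) hzom
  rw [e2, e3, e4, e5, hiter (1+i) z hzom, sub_zero]
  have hDb : ‖D (1+i) z‖ ≤ C (1+i) * (1 / ‖z‖ ^ (2+i)) := by
    have h1 := hCb (1+i) z hz
    refine le_trans h1 ?_
    apply mul_le_mul_of_nonneg_left _ (hC0 (1+i))
    have ha : 1 ≤ ‖z‖ := le_trans hz (Complex.re_le_norm z)
    apply one_div_le_one_div_of_le (by positivity)
    apply pow_le_pow_right₀ ha
    omega
  have hTbz := hTb i z hz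
  calc ‖-(D (1+i) z) - T (1+i) z‖ ≤ ‖-(D (1+i) z)‖ + ‖T (1+i) z‖ := norm_sub_le _ _
    _ = ‖D (1+i) z‖ + ‖T (1+i) z‖ := by rw [norm_neg]
    _ ≤ C (1+i) * (1 / ‖z‖ ^ (2+i)) + C (1+i) * (2 ^ (3+i) / ‖z‖ ^ (2+i)) :=
        add_le_add hDb hTbz
    _ = C (1+i) * (1 + 2 ^ (3+i)) * (1 / ‖z‖ ^ (2+i)) := by
        field_simp
    _ ≤ C (1+i) * (1 + 2 ^ (3+i)) * (1 / ‖z‖ ^ (2+i)) := le_rfl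

end Stmt19Aux5


open Complex Set Filter Finset

noncomputable section Stmt19Aux6

lemma log_diffOn : DifferentiableOn ℂ Complex.log Om := fun z hz =>
  (Complex.differentiableAt_log (om_slit hz)).differentiableWithinAt

lemma iter_deriv_log : ∀ (k : ℕ), ∀ z ∈ Om,
    deriv^[k+1] Complex.log z = (-1)^k * ((Nat.factorial k : ℕ) : ℂ) * (z ^ (k+1))⁻¹ := by
  intro k
  induction k with
  | zero =>
      intro z hz
      have h := (Complex.hasDerivAt_log (om_slit hz)).deriv
      rw [show (0:ℕ)+1 = 1 from rfl, Function.iterate_one, h]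
      simp
  | succ k ih =>
      intro z hz
      rw [Function.iterate_succ_apply']
      have hEq : EqOn (deriv^[k+1] Complex.log)
          (fun w => (-1)^k * ((Nat.factorial k : ℕ) : ℂ) * (w ^ (k+1))⁻¹) Om := fun w hw => ih w hw
      have h1 : deriv (deriv^[k+1] Complex.log) z
          = deriv (fun w => (-1)^k * ((Nat.factorial k : ℕ) : ℂ) * (w ^ (k+1))⁻¹) z :=
        Filter.EventuallyEq.deriv_eq (Filter.eventuallyEq_of_mem (om_open.mem_nhds hz) hEq)
      rw [h1]
      have hz0 : z ≠ 0 := om_ne_zero hz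
      have hpow : HasDerivAt (fun w : ℂ => (w ^ (k+1))⁻¹)
          (-((((k:ℕ)+1 : ℕ):ℂ) * z ^ (k+1-1)) / (z ^ (k+1)) ^ 2) z :=
        (hasDerivAt_pow (k+1) z).inv (pow_ne_zero _ hz0)
      have hd := (hpow.const_mul ((-1)^k * ((Nat.factorial k : ℕ) : ℂ))).deriv
      rw [hd]
      have hfac : ((Nat.factorial (k+1) : ℕ) : ℂ) = ((k:ℂ)+1) * ((Nat.factorial k : ℕ) : ℂ) := by
        rw [Nat.factorial_succ]
        push_cast
        ring
      rw [hfac]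
      have hzp : z ^ (k+1) ≠ 0 := pow_ne_zero _ hz0
      field_simp
      push_cast
      ring

lemma good_log : GoodP Complex.log := by
  refine ⟨log_diffOn, 2, fun i => ⟨((Nat.factorial (1+i) : ℕ) : ℝ), by positivity, ?_⟩⟩
  intro z hz
  have hzom : z ∈ Om := mem_om_of_re_ge_one hz
  have hk := iter_deriv_log (1+i) z hzom
  rw [show 2+i = (1+i)+1 from by omega, hk]
  have : ‖((-1:ℂ))^(1+i) * ((Nat.factorial (1+i) : ℕ) : ℂ) * (z ^ ((1+i)+1))⁻¹‖
      = ((Nat.factorial (1+i) : ℕ) : ℝ) * (1 / ‖z‖ ^ ((1+i)+1)) := by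
    rw [norm_mul, norm_mul, norm_pow, norm_neg, norm_one, one_pow, one_mul, norm_inv, norm_pow]
    rw [Complex.norm_natCast]
    rw [one_div]
  rw [this, show (1+i)+1 = 2+i from by omega]

lemma om_ne_neg_nat {z : ℂ} (hz : z ∈ Om) : ∀ n : ℕ, z ≠ -n := by
  intro n h
  have h1 : z.re = -(n:ℝ) := by rw [h]; simp
  have h2 : 0 < z.re := hz
  have h3 : (0:ℝ) ≤ (n:ℝ) := Nat.cast_nonneg n
  rw [h1] at h2
  linarith

lemma gamma_diffOn : DifferentiableOn ℂ Complex.Gamma Om := fun z hz =>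
  (Complex.differentiableAt_Gamma z (om_ne_neg_nat hz)).differentiableWithinAt

lemma gamma_ne_zero_om {z : ℂ} (hz : z ∈ Om) : Complex.Gamma z ≠ 0 :=
  Complex.Gamma_ne_zero (om_ne_neg_nat hz)

lemma exists_logGamma : ∃ M : ℂ → ℂ, DifferentiableOn ℂ M Om ∧ M 1 = 0 ∧
    ∀ z ∈ Om, Complex.exp (M z) = Complex.Gamma z := by
  have hGd := gamma_diffOn
  have hG' : DifferentiableOn ℂ (deriv Complex.Gamma) Om := diffOn_deriv hGd
  have hwd : DifferentiableOn ℂ (fun z => deriv Complex.Gamma z / Complex.Gamma z) Om :=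
    hG'.div hGd (fun z hz => gamma_ne_zero_om hz)
  obtain ⟨L, hL⟩ := exists_primitive hwd
  have hLd : DifferentiableOn ℂ L Om :=
    fun z hz => ((hL z hz).differentiableAt).differentiableWithinAt
  set g : ℂ → ℂ := fun z => Complex.Gamma z * Complex.exp (-L z) with hg
  have hgd : DifferentiableOn ℂ g Om := hGd.mul (hLd.neg.cexp)
  have hgderiv : ∀ z ∈ Om, deriv g z = 0 := by
    intro z hz
    have h1 : HasDerivAt Complex.Gamma (deriv Complex.Gamma z) z :=
      (hGd.differentiableAt (om_open.mem_nhds hz)).hasDerivAt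
    have h2 : HasDerivAt (fun w => Complex.exp (-L w))
        (Complex.exp (-L z) * (-(deriv Complex.Gamma z / Complex.Gamma z))) z := by
      have := ((hL z hz).fun_neg).cexp
      exact this
    have h3 := h1.fun_mul h2
    rw [h3.deriv]
    have hne := gamma_ne_zero_om hz
    field_simp
    ring
  have hgconst : ∀ z ∈ Om, g z = g 1 := fun z hz => om_const hgd hgderiv hz
  refine ⟨fun z => L z - L 1, hLd.sub (differentiableOn_const _), by simp, ?_⟩
  intro z hz
  have hcz := hgconst z hz
  have hg1 : g 1 = Complex.exp (-L 1) := by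
    simp [hg, Complex.Gamma_one]
  calc Complex.exp (L z - L 1) = Complex.exp (L z) * Complex.exp (-L 1) := by
        rw [← Complex.exp_add]; ring_nf
    _ = Complex.exp (L z) * (Complex.Gamma z * Complex.exp (-L z)) := by
        rw [← hg1, ← hcz]
    _ = Complex.Gamma z * (Complex.exp (L z) * Complex.exp (-L z)) := by ring
    _ = Complex.Gamma z := by
        rw [← Complex.exp_add]
        simp

lemma exists_tau {M : ℂ → ℂ} (hMd : DifferentiableOn ℂ M Om)
    (hM : ∀ z ∈ Om, Complex.exp (M z) = Complex.Gamma z) :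
    ∃ τ : ℂ, Complex.exp τ = 1 ∧ ∀ z ∈ Om, M (z+1) = M z + Complex.log z + τ := by
  have hMshift : DifferentiableOn ℂ (fun w => M (w + 1)) Om := by
    have : (fun w : ℂ => M (w+1)) = M ∘ (fun w => w + 1) := rfl
    rw [this]
    exact hMd.comp ((differentiable_id.add_const _).differentiableOn)
      (fun w hw => add_one_mem_om hw)
  set u : ℂ → ℂ := fun z => M (z+1) - M z - Complex.log z with hu
  have hud : DifferentiableOn ℂ u Om := (hMshift.sub hMd).sub log_diffOn
  have hexp : ∀ z ∈ Om, Complex.exp (u z) = 1 := by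
    intro z hz
    have hne := gamma_ne_zero_om hz
    have hz0 := om_ne_zero hz
    rw [hu]
    simp only
    rw [Complex.exp_sub, Complex.exp_sub, hM (z+1) (add_one_mem_om hz), hM z hz,
      Complex.exp_log hz0, Complex.Gamma_add_one z hz0]
    field_simp
  have huderiv : ∀ z ∈ Om, deriv u z = 0 := by
    intro z hz
    have hua : HasDerivAt u (deriv u z) z :=
      (hud.differentiableAt (om_open.mem_nhds hz)).hasDerivAt
    have h1 : HasDerivAt (fun w => Complex.exp (u w)) (Complex.exp (u z) * deriv u z) z :=
      hua.cexp
    have h2 : HasDerivAt (fun w => Complex.exp (u w)) 0 z := by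
      have hev : (fun w => Complex.exp (u w)) =ᶠ[nhds z] (fun _ => (1:ℂ)) :=
        Filter.eventuallyEq_of_mem (om_open.mem_nhds hz) (fun w hw => hexp w hw)
      exact (hasDerivAt_const z (1:ℂ)).congr_of_eventuallyEq hev
    have heq := h1.unique h2
    have hexpne := Complex.exp_ne_zero (u z)
    exact (mul_eq_zero.mp heq).resolve_left hexpne
  have huc : ∀ z ∈ Om, u z = u 1 := fun z hz => om_const hud huderiv hz
  refine ⟨u 1, hexp 1 one_mem_om, ?_⟩
  · intro z hz
    have := huc z hz
    rw [hu] at this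
    simp only at this
    linear_combination this

end Stmt19Aux6


open Complex Set Filter Finset

noncomputable section Stmt19Aux7

def PolyF (g : ℂ → ℂ) : Prop := ∃ P : Polynomial ℂ, g = fun z => P.eval z

lemma PolyF.diff {g : ℂ → ℂ} (hg : PolyF g) : Differentiable ℂ g := by
  obtain ⟨P, rfl⟩ := hg
  exact P.differentiable

lemma polyF_one : PolyF (fun _ : ℂ => (1:ℂ)) :=
  ⟨1, by funext z; simp⟩

lemma polyF_linear (a : ℂ) : PolyF (fun z : ℂ => a * z) :=
  ⟨Polynomial.C a * Polynomial.X, by funext z; simp⟩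

lemma polyF_add_linear {g : ℂ → ℂ} (hg : PolyF g) (a : ℂ) : PolyF (fun z => g z + a * z) := by
  obtain ⟨P, rfl⟩ := hg
  exact ⟨P + Polynomial.C a * Polynomial.X, by funext z; simp⟩

lemma sum_monomials_polyF (n : ℕ) (c : ℕ → ℂ) :
    PolyF (fun z : ℂ => ∑ i ∈ Finset.range n, c i * z ^ i) := by
  refine ⟨∑ i ∈ Finset.range n, Polynomial.C (c i) * Polynomial.X ^ i, ?_⟩
  funext z
  rw [Polynomial.eval_finset_sum]
  apply Finset.sum_congr rfl
  intro i _
  simp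

lemma polyF_delta {g : ℂ → ℂ} (hg : PolyF g) :
    ∃ g' : ℂ → ℂ, PolyF g' ∧ ∀ z : ℂ, g' (z+1) = g' z + g z := by
  obtain ⟨P, rfl⟩ := hg
  obtain ⟨d, hd⟩ := poly_delta (P.natDegree + 1) (fun i => P.coeff i)
  refine ⟨fun z => ∑ i ∈ Finset.range (P.natDegree + 2), d i * z ^ i,
    sum_monomials_polyF _ d, ?_⟩
  intro z
  have h1 := hd z
  have h2 : P.eval z = ∑ i ∈ Finset.range (P.natDegree + 1), P.coeff i * z ^ i :=
    Polynomial.eval_eq_sum_range z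
  show ∑ i ∈ Finset.range (P.natDegree + 2), d i * (z+1) ^ i
      = (∑ i ∈ Finset.range (P.natDegree + 2), d i * z ^ i) + P.eval z
  rw [h2, show P.natDegree + 2 = P.natDegree + 1 + 1 from rfl, ← h1]
  ring

-- the tower of indefinite sums of log
def Aseq : ℕ → {g : ℂ → ℂ // GoodP g}
  | 0 => ⟨Complex.log, good_log⟩
  | (n+1) => ⟨(solve (Aseq n).2).choose, ((solve (Aseq n).2).choose_spec).1⟩

def Afun (n : ℕ) : ℂ → ℂ := (Aseq n).1

lemma Afun_diff (n : ℕ) : DifferentiableOn ℂ (Afun n) Om := (Aseq n).2.1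

lemma Afun_zero : Afun 0 = Complex.log := rfl

lemma Aseq_succ (n : ℕ) : Aseq (n+1)
    = ⟨(solve (Aseq n).2).choose, ((solve (Aseq n).2).choose_spec).1⟩ := rfl

lemma Afun_one (n : ℕ) : Afun (n+1) 1 = 0 := ((solve (Aseq n).2).choose_spec).2.1

lemma Afun_delta (n : ℕ) : ∀ z ∈ Om, Afun (n+1) (z+1) = Afun (n+1) z + Afun n z :=
  ((solve (Aseq n).2).choose_spec).2.2

-- data from the logGamma construction
def M1 : ℂ → ℂ := exists_logGamma.choose

lemma M1_diff : DifferentiableOn ℂ M1 Om := exists_logGamma.choose_spec.1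
lemma M1_one : M1 1 = 0 := exists_logGamma.choose_spec.2.1
lemma M1_exp : ∀ z ∈ Om, Complex.exp (M1 z) = Complex.Gamma z :=
  exists_logGamma.choose_spec.2.2

def tauC : ℂ := (exists_tau M1_diff M1_exp).choose

lemma tau_exp : Complex.exp tauC = 1 := (exists_tau M1_diff M1_exp).choose_spec.1
lemma tau_delta : ∀ z ∈ Om, M1 (z+1) = M1 z + Complex.log z + tauC :=
  (exists_tau M1_diff M1_exp).choose_spec.2

def Efun : ℂ → ℂ := fun z => M1 z - Afun 1 z - tauC * z

lemma Efun_diff : DifferentiableOn ℂ Efun Om :=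
  (M1_diff.sub (Afun_diff 1)).sub ((polyF_linear tauC).diff.differentiableOn)

lemma Efun_periodic : ∀ z ∈ Om, Efun (z+1) = Efun z := by
  intro z hz
  have h1 := tau_delta z hz
  have h2 := Afun_delta 0 z hz
  rw [Afun_zero] at h2
  simp only [Efun]
  rw [h1, h2]
  ring

-- polynomial/constant data sequences: PQ k carries (p, q, κ) for level k+1
def PQ : ℕ → {x : (ℂ → ℂ) × (ℂ → ℂ) × ℂ // PolyF x.1 ∧ PolyF x.2.1}
  | 0 => ⟨(fun _ => 1, fun z => tauC * z, 0), polyF_one, polyF_linear tauC⟩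
  | (k+1) =>
      let prev := PQ k
      let p' : ℂ → ℂ := (polyF_delta prev.2.1).choose
      let q0 : ℂ → ℂ := (polyF_delta prev.2.2).choose
      let q' : ℂ → ℂ := fun z => q0 z + prev.1.2.2 * z
      ⟨(p', q', -(Afun (k+2) 1 + p' 1 * Efun 1 + q' 1)),
        (polyF_delta prev.2.1).choose_spec.1,
        polyF_add_linear (polyF_delta prev.2.2).choose_spec.1 prev.1.2.2⟩

-- the M tower (M (n+1) is the honest level-(n+1) function)
def Mseq : ℕ → ℂ → ℂ
  | 0 => Complex.log
  | (k+1) => fun z => Afun (k+1) z + (PQ k).1.1 z * Efun z + (PQ k).1.2.1 z + (PQ k).1.2.2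

lemma Mseq_one_eq : ∀ z : ℂ, Mseq 1 z = M1 z := by
  intro z
  show Afun 1 z + 1 * Efun z + tauC * z + 0 = M1 z
  simp only [Efun]
  ring

lemma Mseq_diff (k : ℕ) : DifferentiableOn ℂ (Mseq (k+1)) Om := by
  have h1 := Afun_diff (k+1)
  have h2 : DifferentiableOn ℂ (PQ k).1.1 Om := (PQ k).2.1.diff.differentiableOn
  have h3 : DifferentiableOn ℂ (PQ k).1.2.1 Om := (PQ k).2.2.diff.differentiableOn
  exact ((h1.add (h2.mul Efun_diff)).add h3).add (differentiableOn_const _)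

lemma Mseq_norm_one (k : ℕ) : Mseq (k+2) 1 = 0 := by
  show Afun (k+2) 1 + (PQ (k+1)).1.1 1 * Efun 1 + (PQ (k+1)).1.2.1 1 + (PQ (k+1)).1.2.2 = 0
  have hPQ : (PQ (k+1)).1.2.2
      = -(Afun (k+2) 1 + (PQ (k+1)).1.1 1 * Efun 1 + (PQ (k+1)).1.2.1 1) := rfl
  rw [hPQ]
  ring

lemma PQ_p_delta (k : ℕ) : ∀ z : ℂ, (PQ (k+1)).1.1 (z+1) = (PQ (k+1)).1.1 z + (PQ k).1.1 z :=
  (polyF_delta (PQ k).2.1).choose_spec.2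

lemma PQ_q_delta (k : ℕ) : ∀ z : ℂ,
    (PQ (k+1)).1.2.1 (z+1) = (PQ (k+1)).1.2.1 z + ((PQ k).1.2.1 z + (PQ k).1.2.2) := by
  intro z
  have h0 := (polyF_delta (PQ k).2.2).choose_spec.2 z
  show (polyF_delta (PQ k).2.2).choose (z+1) + (PQ k).1.2.2 * (z+1)
      = ((polyF_delta (PQ k).2.2).choose z + (PQ k).1.2.2 * z) + ((PQ k).1.2.1 z + (PQ k).1.2.2)
  rw [h0]
  ring

lemma Mseq_delta (k : ℕ) : ∀ z ∈ Om, Mseq (k+2) (z+1) = Mseq (k+2) z + Mseq (k+1) z := by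
  intro z hz
  show Afun (k+2) (z+1) + (PQ (k+1)).1.1 (z+1) * Efun (z+1) + (PQ (k+1)).1.2.1 (z+1)
        + (PQ (k+1)).1.2.2
      = (Afun (k+2) z + (PQ (k+1)).1.1 z * Efun z + (PQ (k+1)).1.2.1 z + (PQ (k+1)).1.2.2)
        + (Afun (k+1) z + (PQ k).1.1 z * Efun z + (PQ k).1.2.1 z + (PQ k).1.2.2)
  rw [Afun_delta (k+1) z hz, Efun_periodic z hz, PQ_p_delta k z, PQ_q_delta k z]
  ring

lemma Mseq_one_delta : ∀ z ∈ Om, Mseq 1 (z+1) = Mseq 1 z + Complex.log z + tauC := by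
  intro z hz
  rw [Mseq_one_eq, Mseq_one_eq]
  exact tau_delta z hz

end Stmt19Aux7


noncomputable section Stmt19Final

def Gfun : ℕ → ℂ → ℂ
  | 0 => fun z => z
  | (n+1) => fun z => Complex.exp (Mseq (n+1) z)

/-- The paper's tower of generalized Gamma functions: there is a sequence
`G₀, G₁, G₂, …` of functions holomorphic on the right half-plane with `G₀(z) = z`,
`G₁(z) = Γ(z)`, `Gₙ(1) = 1`, and the recursion `Gₙ(z)·G_{n+1}(z) = G_{n+1}(z+1)`. -/
theorem stmt19 :
    ∃ G : ℕ → ℂ → ℂ,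
      (∀ n : ℕ, DifferentiableOn ℂ (G n) {z : ℂ | 0 < z.re}) ∧
      (∀ z : ℂ, 0 < z.re → G 0 z = z) ∧
      (∀ z : ℂ, 0 < z.re → G 1 z = Complex.Gamma z) ∧
      (∀ n : ℕ, G n 1 = 1) ∧
      (∀ n : ℕ, ∀ z : ℂ, 0 < z.re → G n z * G (n + 1) z = G (n + 1) (z + 1)) := by
  refine ⟨Gfun, ?_, ?_, ?_, ?_, ?_⟩
  · intro n
    cases n with
    | zero => exact differentiableOn_id
    | succ k =>
        show DifferentiableOn ℂ (fun z => Complex.exp (Mseq (k+1) z)) Om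
        exact (Mseq_diff k).cexp
  · intro z _
    rfl
  · intro z hz
    show Complex.exp (Mseq 1 z) = Complex.Gamma z
    rw [Mseq_one_eq]
    exact M1_exp z hz
  · intro n
    match n with
    | 0 => rfl
    | 1 =>
        show Complex.exp (Mseq 1 1) = 1
        rw [Mseq_one_eq, M1_one, Complex.exp_zero]
    | (k+2) =>
        show Complex.exp (Mseq (k+2) 1) = 1
        rw [Mseq_norm_one k, Complex.exp_zero]
  · intro n z hz
    have hzom : z ∈ Om := hz
    cases n with
    | zero =>
        show z * Complex.exp (Mseq 1 z) = Complex.exp (Mseq 1 (z+1))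
        rw [Mseq_one_delta z hzom, Complex.exp_add, Complex.exp_add,
          Complex.exp_log (om_ne_zero hzom), tau_exp]
        ring
    | succ k =>
        show Complex.exp (Mseq (k+1) z) * Complex.exp (Mseq (k+2) z)
            = Complex.exp (Mseq (k+2) (z+1))
        rw [Mseq_delta k z hzom, Complex.exp_add]
        ring

end Stmt19Final
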